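/- arXiv:2204.00180 — 5 statements merged into one kernel-verified Lean document; each statement's English description precedes it below -/
import Mathlib

section
/- Let θ_j^L and θ_j^U denote the bounds θ_j^L = [max(0, P(t=j,r=j) − P(r=j,y=1−j)) + max(0, P(r=1−j,y=j) − P(t=1−j,r=1−j))]/P(y=j) and θ_j^U = [min(P(t=j,r=1−j), P(r=1−j,y=j)) + min(P(t=j,r=j), P(r=j,y=j))]/P(y=j). Then for any binary random variables t, r, y with 0 < P(y=j) we have θ_j^L ≤ P(t=j | y=j) ≤ θ_j^U. -/
open MeasureTheory

/-- Split a measure of a set according to the value of a boolean function. -/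
lemma split_meas {Ω : Type*} [MeasurableSpace Ω] (μ : Measure Ω) [IsProbabilityMeasure μ]
    (A : Set Ω) (hA : MeasurableSet A) (f : Ω → Bool) (hf : Measurable f) (b : Bool) :
    (μ A).toReal = (μ {ω | ω ∈ A ∧ f ω = b}).toReal + (μ {ω | ω ∈ A ∧ f ω = !b}).toReal := by
  have hu : A = {ω | ω ∈ A ∧ f ω = b} ∪ {ω | ω ∈ A ∧ f ω = !b} := by
    ext ω
    simp only [Set.mem_union, Set.mem_setOf_eq]
    constructor
    · intro h
      cases b <;> cases hfo : f ω <;> simp [hfo] <;> exact h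
    · rintro (⟨h, _⟩ | ⟨h, _⟩) <;> exact h
  rw [← ENNReal.toReal_add (measure_ne_top μ _) (measure_ne_top μ _), ← measure_union]
  · rw [← hu]
  · refine Set.disjoint_left.2 ?_
    rintro ω ⟨_, h1⟩ ⟨_, h2⟩
    rw [h1] at h2
    cases b <;> simp at h2
  · exact hA.inter (hf (measurableSet_singleton _))

/-- sharp bounds on θ_j = P(t=j | y=j). -/
theorem theta_bounds {Ω : Type*} [MeasurableSpace Ω] (μ : Measure Ω)
    [IsProbabilityMeasure μ] (t r y : Ω → Bool)
    (ht : Measurable t) (hr : Measurable r) (hy : Measurable y) (j : Bool)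
    (hyj : 0 < (μ {ω | y ω = j}).toReal) :
    (max 0 ((μ {ω | t ω = j ∧ r ω = j}).toReal - (μ {ω | r ω = j ∧ y ω = !j}).toReal)
      + max 0 ((μ {ω | r ω = !j ∧ y ω = j}).toReal
          - (μ {ω | t ω = !j ∧ r ω = !j}).toReal)) / (μ {ω | y ω = j}).toReal
      ≤ (μ {ω | t ω = j ∧ y ω = j}).toReal / (μ {ω | y ω = j}).toReal
    ∧ (μ {ω | t ω = j ∧ y ω = j}).toReal / (μ {ω | y ω = j}).toReal
      ≤ (min ((μ {ω | t ω = j ∧ r ω = !j}).toReal) ((μ {ω | r ω = !j ∧ y ω = j}).toReal)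
        + min ((μ {ω | t ω = j ∧ r ω = j}).toReal) ((μ {ω | r ω = j ∧ y ω = j}).toReal))
          / (μ {ω | y ω = j}).toReal := by
  have mono : ∀ S T : Set Ω, S ⊆ T → (μ S).toReal ≤ (μ T).toReal := fun S T h =>
    ENNReal.toReal_mono (measure_ne_top μ _) (measure_mono h)
  have mt : MeasurableSet {ω | t ω = j} := ht (measurableSet_singleton j)
  have mr : MeasurableSet {ω | r ω = j} := hr (measurableSet_singleton j)
  have mr' : MeasurableSet {ω | r ω = !j} := hr (measurableSet_singleton (!j))
  have my : MeasurableSet {ω | y ω = j} := hy (measurableSet_singleton j)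
  -- A = P(t=j, r=j, y=j), B = P(t=j, r=!j, y=j)
  set A := (μ {ω | (t ω = j ∧ y ω = j) ∧ r ω = j}).toReal with hA
  set B := (μ {ω | (t ω = j ∧ y ω = j) ∧ r ω = !j}).toReal with hB
  -- split of the target probability
  have hsplit : (μ {ω | t ω = j ∧ y ω = j}).toReal = A + B := by
    have := split_meas μ {ω | t ω = j ∧ y ω = j} (mt.inter my) r hr j
    simpa using this
  have hApos : 0 ≤ A := ENNReal.toReal_nonneg
  have hBpos : 0 ≤ B := ENNReal.toReal_nonneg
  -- lower bound for A : P(t=j,r=j) - P(r=j,y=!j) ≤ A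
  have hAlow : (μ {ω | t ω = j ∧ r ω = j}).toReal - (μ {ω | r ω = j ∧ y ω = !j}).toReal ≤ A := by
    have h1 : (μ {ω | t ω = j ∧ r ω = j}).toReal
        = (μ {ω | (t ω = j ∧ r ω = j) ∧ y ω = j}).toReal
          + (μ {ω | (t ω = j ∧ r ω = j) ∧ y ω = !j}).toReal := by
      have := split_meas μ {ω | t ω = j ∧ r ω = j} (mt.inter mr) y hy j
      simpa using this
    have h2 : (μ {ω | (t ω = j ∧ r ω = j) ∧ y ω = j}).toReal = A := by
      rw [hA]; congr 1; congr 1; ext ω; simp only [Set.mem_setOf_eq]; tauto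
    have h3 : (μ {ω | (t ω = j ∧ r ω = j) ∧ y ω = !j}).toReal
        ≤ (μ {ω | r ω = j ∧ y ω = !j}).toReal := mono _ _ (fun ω h => ⟨h.1.2, h.2⟩)
    linarith
  -- lower bound for B : P(r=!j,y=j) - P(t=!j,r=!j) ≤ B
  have hBlow : (μ {ω | r ω = !j ∧ y ω = j}).toReal
      - (μ {ω | t ω = !j ∧ r ω = !j}).toReal ≤ B := by
    have h1 : (μ {ω | r ω = !j ∧ y ω = j}).toReal
        = (μ {ω | (r ω = !j ∧ y ω = j) ∧ t ω = j}).toReal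
          + (μ {ω | (r ω = !j ∧ y ω = j) ∧ t ω = !j}).toReal := by
      have := split_meas μ {ω | r ω = !j ∧ y ω = j} (mr'.inter my) t ht j
      simpa using this
    have h2 : (μ {ω | (r ω = !j ∧ y ω = j) ∧ t ω = j}).toReal = B := by
      rw [hB]; congr 1; congr 1; ext ω; simp only [Set.mem_setOf_eq]; tauto
    have h3 : (μ {ω | (r ω = !j ∧ y ω = j) ∧ t ω = !j}).toReal
        ≤ (μ {ω | t ω = !j ∧ r ω = !j}).toReal := mono _ _ (fun ω h => ⟨h.2, h.1.1⟩)
    linarith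
  -- upper bounds
  have hAup1 : A ≤ (μ {ω | t ω = j ∧ r ω = j}).toReal :=
    mono _ _ (fun ω h => ⟨h.1.1, h.2⟩)
  have hAup2 : A ≤ (μ {ω | r ω = j ∧ y ω = j}).toReal :=
    mono _ _ (fun ω h => ⟨h.2, h.1.2⟩)
  have hBup1 : B ≤ (μ {ω | t ω = j ∧ r ω = !j}).toReal :=
    mono _ _ (fun ω h => ⟨h.1.1, h.2⟩)
  have hBup2 : B ≤ (μ {ω | r ω = !j ∧ y ω = j}).toReal :=
    mono _ _ (fun ω h => ⟨h.2, h.1.2⟩)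
  constructor
  · rw [div_le_div_iff_of_pos_right hyj, hsplit]
    have := max_le hApos hAlow
    have := max_le hBpos hBlow
    linarith
  · rw [div_le_div_iff_of_pos_right hyj, hsplit]
    have := le_min hBup1 hBup2
    have := le_min hAup1 hAup2
    linarith
end

section
/- The interval [max(0, P(t=j) − P(y=1−j)), min(P(t=j), P(y=j))]/P(y=j) obtained from Fréchet bounds on the marginals contains the interval [θ_j^L, θ_j^U] obtained from the refined bounds that use the joint distributions with r. That is, max(0, P(t=j)−P(y=1−j)) ≤ max(0, P(t=j,r=j)−P(r=j,y=1−j)) + max(0, P(r=1−j,y=j)−P(t=1−j,r=1−j)) and min(P(t=j,r=1−j), P(r=1−j,y=j)) + min(P(t=j,r=j), P(r=j,y=j)) ≤ min(P(t=j), P(y=j)). -/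
open MeasureTheory

lemma split_left {Ω : Type*} [MeasurableSpace Ω] (μ : Measure Ω)
    (g : Ω → Bool) (hg : Measurable g) (p : Ω → Prop)
    (hp : MeasurableSet {ω | p ω}) (b : Bool) :
    μ {ω | p ω ∧ g ω = b} + μ {ω | p ω ∧ g ω = !b} = μ {ω | p ω} := by
  rw [← measure_union]
  · congr 1
    ext ω
    simp only [Set.mem_union, Set.mem_setOf_eq]
    cases hb : g ω <;> cases b <;> simp [hb] <;> tauto
  · rw [Set.disjoint_left]
    rintro ω ⟨-, h1⟩ ⟨-, h2⟩
    rw [h1] at h2; cases b <;> simp at h2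
  · exact hp.inter (hg (measurableSet_singleton _))

lemma split_right {Ω : Type*} [MeasurableSpace Ω] (μ : Measure Ω)
    (g : Ω → Bool) (hg : Measurable g) (p : Ω → Prop)
    (hp : MeasurableSet {ω | p ω}) (b : Bool) :
    μ {ω | g ω = b ∧ p ω} + μ {ω | g ω = !b ∧ p ω} = μ {ω | p ω} := by
  have h1 : {ω | g ω = b ∧ p ω} = {ω | p ω ∧ g ω = b} := by ext ω; simp [and_comm]
  have h2 : {ω | g ω = (!b) ∧ p ω} = {ω | p ω ∧ g ω = !b} := by ext ω; simp [and_comm]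
  rw [h1, h2, split_left μ g hg p hp b]

lemma split_left' {Ω : Type*} [MeasurableSpace Ω] (μ : Measure Ω)
    [IsProbabilityMeasure μ] (g : Ω → Bool) (hg : Measurable g) (p : Ω → Prop)
    (hp : MeasurableSet {ω | p ω}) (b : Bool) :
    (μ {ω | p ω ∧ g ω = b}).toReal + (μ {ω | p ω ∧ g ω = !b}).toReal
      = (μ {ω | p ω}).toReal := by
  rw [← ENNReal.toReal_add (measure_ne_top _ _) (measure_ne_top _ _),
    split_left μ g hg p hp b]

lemma split_right' {Ω : Type*} [MeasurableSpace Ω] (μ : Measure Ω)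
    [IsProbabilityMeasure μ] (g : Ω → Bool) (hg : Measurable g) (p : Ω → Prop)
    (hp : MeasurableSet {ω | p ω}) (b : Bool) :
    (μ {ω | g ω = b ∧ p ω}).toReal + (μ {ω | g ω = !b ∧ p ω}).toReal
      = (μ {ω | p ω}).toReal := by
  rw [← ENNReal.toReal_add (measure_ne_top _ _) (measure_ne_top _ _),
    split_right μ g hg p hp b]

/-- the marginal Fréchet bounds are at least as wide as the refined bounds. -/
theorem marginal_bounds_wider {Ω : Type*} [MeasurableSpace Ω] (μ : Measure Ω)
    [IsProbabilityMeasure μ] (t r y : Ω → Bool)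
    (ht : Measurable t) (hr : Measurable r) (hy : Measurable y) (j : Bool)
    (hyj : 0 < (μ {ω | y ω = j}).toReal) :
    max 0 ((μ {ω | t ω = j}).toReal - (μ {ω | y ω = !j}).toReal)
      ≤ max 0 ((μ {ω | t ω = j ∧ r ω = j}).toReal - (μ {ω | r ω = j ∧ y ω = !j}).toReal)
        + max 0 ((μ {ω | r ω = !j ∧ y ω = j}).toReal
            - (μ {ω | t ω = !j ∧ r ω = !j}).toReal)
    ∧ min ((μ {ω | t ω = j ∧ r ω = !j}).toReal) ((μ {ω | r ω = !j ∧ y ω = j}).toReal)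
        + min ((μ {ω | t ω = j ∧ r ω = j}).toReal) ((μ {ω | r ω = j ∧ y ω = j}).toReal)
      ≤ min ((μ {ω | t ω = j}).toReal) ((μ {ω | y ω = j}).toReal) := by
  have E1 := split_left' μ r hr (fun ω => t ω = j) (ht (measurableSet_singleton j)) j
  have E2 := split_right' μ r hr (fun ω => y ω = !j) (hy (measurableSet_singleton (!j))) j
  have E3 := split_right' μ t ht (fun ω => r ω = !j) (hr (measurableSet_singleton (!j))) j
  have E4 := split_left' μ y hy (fun ω => r ω = !j) (hr (measurableSet_singleton (!j))) j
  have E5 := split_right' μ r hr (fun ω => y ω = j) (hy (measurableSet_singleton j)) j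
  set a := (μ {ω | t ω = j ∧ r ω = j}).toReal
  set b := (μ {ω | t ω = j ∧ r ω = !j}).toReal
  set c := (μ {ω | r ω = j ∧ y ω = !j}).toReal
  set d := (μ {ω | r ω = !j ∧ y ω = !j}).toReal
  set e := (μ {ω | t ω = !j ∧ r ω = !j}).toReal
  set f := (μ {ω | r ω = !j ∧ y ω = j}).toReal
  set g := (μ {ω | r ω = j ∧ y ω = j}).toReal
  constructor
  · have h1 : a - c ≤ max 0 (a - c) := le_max_right _ _
    have h2 : f - e ≤ max 0 (f - e) := le_max_right _ _
    have h3 : (0:ℝ) ≤ max 0 (a - c) := le_max_left _ _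
    have h4 : (0:ℝ) ≤ max 0 (f - e) := le_max_left _ _
    apply max_le <;> linarith
  · have h1 : min b f ≤ b := min_le_left _ _
    have h2 : min b f ≤ f := min_le_right _ _
    have h3 : min a g ≤ a := min_le_left _ _
    have h4 : min a g ≤ g := min_le_right _ _
    apply le_min <;> linarith
end

section
/- Suppose (θ_1, θ_0) lie on the line θ_0 = θ_1·π*/(1−π*) + 1 − q*/(1−π*) where π* ∈ (0,1) and q* ∈ (0,1) are the performance-study prevalence and positive rate. Then the implied screening prevalence (p + θ_0 − 1)/(θ_1 + θ_0 − 1) equals (p(1−π*) + θ_1·π* − q*)/(θ_1 − q*), and its derivative with respect to θ_1 equals (q* − p)(1−π*)/(q* − θ_1)², which has constant sign in θ_1 (for θ_1 ≠ q*). Hence the extrema over a closed interval [θ_1^L, θ_1^H] not containing q* are attained at the endpoints. -/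
open Set

/-- prevalence along the linear identified set, its derivative,
and attainment of extrema at endpoints. -/
theorem prevalence_along_line (p q π L H : ℝ)
    (hπ0 : 0 < π) (hπ1 : π < 1) (hq0 : 0 < q) (hq1 : q < 1)
    (hp0 : 0 ≤ p) (hp1 : p ≤ 1) :
    (∀ θ1 θ0 : ℝ, θ1 ≠ q → θ0 = θ1 * π / (1 - π) + 1 - q / (1 - π) →
      (p + θ0 - 1) / (θ1 + θ0 - 1) = (p * (1 - π) + θ1 * π - q) / (θ1 - q))
    ∧ (∀ θ1 : ℝ, θ1 ≠ q →
        HasDerivAt (fun x : ℝ => (p * (1 - π) + x * π - q) / (x - q))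
          ((q - p) * (1 - π) / (q - θ1) ^ 2) θ1)
    ∧ (L ≤ H → q ∉ Icc L H → ∀ θ1 ∈ Icc L H,
        min ((p * (1 - π) + L * π - q) / (L - q)) ((p * (1 - π) + H * π - q) / (H - q))
          ≤ (p * (1 - π) + θ1 * π - q) / (θ1 - q)
        ∧ (p * (1 - π) + θ1 * π - q) / (θ1 - q)
          ≤ max ((p * (1 - π) + L * π - q) / (L - q))
              ((p * (1 - π) + H * π - q) / (H - q))) := by
  have hπ : (1 : ℝ) - π ≠ 0 := by linarith
  -- rewriting lemma : f x = π + (p - q) * (1 - π) * (1/(x - q))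
  have feq : ∀ x : ℝ, x ≠ q →
      (p * (1 - π) + x * π - q) / (x - q) = π + (p - q) * (1 - π) * (1 / (x - q)) := by
    intro x hx
    have hxq : x - q ≠ 0 := sub_ne_zero.mpr hx
    field_simp
    ring
  refine ⟨?_, ?_, ?_⟩
  · intro θ1 θ0 h1 h0
    have hxq : θ1 - q ≠ 0 := sub_ne_zero.mpr h1
    have hnum : p + θ0 - 1 = (p * (1 - π) + θ1 * π - q) / (1 - π) := by
      rw [h0]; field_simp; ring
    have hden : θ1 + θ0 - 1 = (θ1 - q) / (1 - π) := by
      rw [h0]; field_simp; ring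
    rw [hnum, hden]
    rw [div_div_div_comm, div_self hπ, div_one]
  · intro θ1 h1
    have hxq : θ1 - q ≠ 0 := sub_ne_zero.mpr h1
    have hd : HasDerivAt (fun x : ℝ => (p * (1 - π) + x * π - q) / (x - q))
        ((π * (θ1 - q) - (p * (1 - π) + θ1 * π - q) * 1) / (θ1 - q) ^ 2) θ1 := by
      have hnum : HasDerivAt (fun x : ℝ => p * (1 - π) + x * π - q) π θ1 := by
        simpa using (((hasDerivAt_id θ1).mul_const π).const_add (p * (1 - π))).sub_const q
      have hden : HasDerivAt (fun x : ℝ => x - q) 1 θ1 := by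
        simpa using (hasDerivAt_id θ1).sub_const q
      exact hnum.div hden hxq
    convert hd using 1
    have h2 : (q - θ1) ^ 2 = (θ1 - q) ^ 2 := by ring
    rw [h2]
    field_simp
    ring
  · intro hLH hq θ1 hθ1
    obtain ⟨hL1, h1H⟩ := hθ1
    have hside : q < L ∨ H < q := by
      rcases lt_or_ge q L with h | h
      · exact Or.inl h
      · rcases lt_or_ge H q with h2 | h2
        · exact Or.inr h2
        · exact absurd ⟨h, h2⟩ hq
    have hLne : L ≠ q := by rcases hside with h | h; exact ne_of_gt h; exact ne_of_lt (lt_of_le_of_lt hLH h)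
    have hHne : H ≠ q := by rcases hside with h | h; exact ne_of_gt (lt_of_lt_of_le h hLH); exact ne_of_lt h
    have h1ne : θ1 ≠ q := by rcases hside with h | h; exact ne_of_gt (lt_of_lt_of_le h hL1); exact ne_of_lt (lt_of_le_of_lt h1H h)
    -- key: 1/(H - q) ≤ 1/(θ1 - q) ≤ 1/(L - q)
    have key : 1 / (H - q) ≤ 1 / (θ1 - q) ∧ 1 / (θ1 - q) ≤ 1 / (L - q) := by
      rcases hside with h | h
      · have hL : 0 < L - q := by linarith
        have hx : 0 < θ1 - q := by linarith
        constructor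
        · exact one_div_le_one_div_of_le hx (by linarith)
        · exact one_div_le_one_div_of_le hL (by linarith)
      · have hH : H - q < 0 := by linarith
        have hx : θ1 - q < 0 := by linarith
        constructor
        · exact one_div_le_one_div_of_neg_of_le hH (by linarith)
        · exact one_div_le_one_div_of_neg_of_le hx (by linarith)
    rw [feq L hLne, feq H hHne, feq θ1 h1ne]
    set c := (p - q) * (1 - π) with hc
    rcases le_or_gt 0 c with hc0 | hc0
    · have h1 : c * (1 / (H - q)) ≤ c * (1 / (θ1 - q)) := mul_le_mul_of_nonneg_left key.1 hc0
      have h2 : c * (1 / (θ1 - q)) ≤ c * (1 / (L - q)) := mul_le_mul_of_nonneg_left key.2 hc0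
      constructor
      · exact le_trans (min_le_right _ _) (by linarith)
      · exact le_trans (by linarith) (le_max_left _ _)
    · have h1 : c * (1 / (θ1 - q)) ≤ c * (1 / (H - q)) := mul_le_mul_of_nonpos_left key.1 hc0.le
      have h2 : c * (1 / (L - q)) ≤ c * (1 / (θ1 - q)) := mul_le_mul_of_nonpos_left key.2 hc0.le
      constructor
      · exact le_trans (min_le_left _ _) (by linarith)
      · exact le_trans (by linarith) (le_max_right _ _)
end

section
/- If the identified set for (θ_1, θ_0) is not a singleton (θ_1^L < θ_1^U and θ_0^L < θ_0^U) and all values satisfy θ_1 + θ_0 > 1, then the sharp prevalence bound interval [min{f(θ_1^L,θ_0^L), f(θ_1^U,θ_0^U)}, max{f(θ_1^L,θ_0^L), f(θ_1^U,θ_0^U)}] is strictly contained in the rectangle-based interval [f(θ_1^U,θ_0^L), f(θ_1^L,θ_0^U)], where f(a,b) = (p + b − 1)/(a + b − 1) for fixed p ∈ (1−θ_0^L, θ_1^L). -/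
/-- the sharp prevalence bounds are strictly inside the
rectangle-based bounds when the identified set is not a singleton. -/
theorem sharp_prevalence_strictly_narrower (θ1L θ1U θ0L θ0U p : ℝ)
    (h1 : θ1L < θ1U) (h0 : θ0L < θ0U)
    (h1L : 0 ≤ θ1L) (h1U : θ1U ≤ 1) (h0L : 0 ≤ θ0L) (h0U : θ0U ≤ 1)
    (hcorner : 1 < θ1L + θ0L)
    (hpl : 1 - θ0L < p) (hpu : p < θ1L) :
    (p + θ0L - 1) / (θ1U + θ0L - 1)
      < min ((p + θ0L - 1) / (θ1L + θ0L - 1)) ((p + θ0U - 1) / (θ1U + θ0U - 1))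
    ∧ max ((p + θ0L - 1) / (θ1L + θ0L - 1)) ((p + θ0U - 1) / (θ1U + θ0U - 1))
      < (p + θ0U - 1) / (θ1L + θ0U - 1) := by
  constructor
  · apply lt_min <;> rw [div_lt_div_iff₀ (by linarith) (by linarith)] <;> nlinarith
  · apply max_lt <;> rw [div_lt_div_iff₀ (by linarith) (by linarith)] <;> nlinarith
end

section
/- Let (t, r) be a pair of Bernoulli random variables whose joint distribution satisfies P(t=j, r=k) ≥ ε for all (j,k) ∈ {0,1}² with 0 < ε ≤ 1/4. Then the squared correlation satisfies ρ(r,t)² ≤ (1−4ε)², with equality attainable; in particular ρ(r,t)² < 1 when ε > 0. -/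
/-- Key lemma: for reals each at least ε summing to 1,
    `a*d - b*c ≤ (1 - 4ε)*(a+b)*(c+d)`. -/
lemma cov_le_aux (ε a b c d : ℝ) (hε : 0 < ε) (ha : ε ≤ a) (hb : ε ≤ b)
    (hc : ε ≤ c) (hd : ε ≤ d) (hsum : a + b + c + d = 1) :
    a * d - b * c ≤ (1 - 4 * ε) * ((a + b) * (c + d)) := by
  have h14 : (0:ℝ) ≤ 1 - 4 * ε := by linarith
  have h12 : (0:ℝ) ≤ 1 - 2 * ε := by linarith
  have hd' : d = 1 - a - b - c := by linarith
  rw [hd']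
  nlinarith [mul_nonneg h14 (mul_nonneg (by linarith : (0:ℝ) ≤ a) (by linarith : (0:ℝ) ≤ c - ε)),
    mul_nonneg h14 (mul_nonneg (by linarith : (0:ℝ) ≤ 1 - a - b - c) (by linarith : (0:ℝ) ≤ b - ε)),
    mul_nonneg h12 (mul_nonneg (by linarith : (0:ℝ) ≤ b) (by linarith : (0:ℝ) ≤ c - ε)),
    mul_nonneg h12 (mul_nonneg (by linarith : (0:ℝ) ≤ c) (by linarith : (0:ℝ) ≤ b - ε)),
    mul_nonneg (mul_nonneg hε.le (by linarith : (0:ℝ) ≤ b + c - 2 * ε))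
      (by linarith : (0:ℝ) ≤ 1 + a + (1 - a - b - c)),
    mul_nonneg hε.le (sq_nonneg (a - (1 - a - b - c)))]

/-- bound on the squared correlation of two Bernoulli variables
whose joint probabilities are all at least ε. Here p_{jk} = P(t=j, r=k),
E r = p11 + p01, E t = p11 + p10, E(rt) = p11. -/
theorem bernoulli_correlation_bound (ε : ℝ) (hε : 0 < ε) (hε4 : ε ≤ 1 / 4) :
    (∀ p11 p10 p01 p00 : ℝ, ε ≤ p11 → ε ≤ p10 → ε ≤ p01 → ε ≤ p00 →
      p11 + p10 + p01 + p00 = 1 →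
      (p11 - (p11 + p01) * (p11 + p10)) ^ 2
          / (((p11 + p01) * (1 - (p11 + p01))) * ((p11 + p10) * (1 - (p11 + p10))))
        ≤ (1 - 4 * ε) ^ 2)
    ∧ (∃ p11 p10 p01 p00 : ℝ, ε ≤ p11 ∧ ε ≤ p10 ∧ ε ≤ p01 ∧ ε ≤ p00 ∧
        p11 + p10 + p01 + p00 = 1 ∧
        (p11 - (p11 + p01) * (p11 + p10)) ^ 2
            / (((p11 + p01) * (1 - (p11 + p01))) * ((p11 + p10) * (1 - (p11 + p10))))
          = (1 - 4 * ε) ^ 2)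
    ∧ (1 - 4 * ε) ^ 2 < 1 := by
  refine ⟨?_, ?_, by nlinarith⟩
  · intro a b c d ha hb hc hd hsum
    have h14 : (0:ℝ) ≤ 1 - 4 * ε := by linarith
    have h1ac : 1 - (a + c) = b + d := by linarith
    have h1ab : 1 - (a + b) = c + d := by linarith
    rw [h1ac, h1ab]
    have pac : (0:ℝ) < a + c := by linarith
    have pbd : (0:ℝ) < b + d := by linarith
    have pab : (0:ℝ) < a + b := by linarith
    have pcd : (0:ℝ) < c + d := by linarith
    have hden : 0 < ((a + c) * (b + d)) * ((a + b) * (c + d)) := by positivity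
    rw [div_le_iff₀ hden]
    have hcov : a - (a + c) * (a + b) = a * d - b * c := by nlinarith [hsum]
    rw [hcov]
    have hY : (0:ℝ) ≤ (1 - 4 * ε) * ((a + c) * (b + d)) :=
      mul_nonneg h14 (by positivity)
    have h1 := cov_le_aux ε a b c d hε ha hb hc hd hsum
    have h2 := cov_le_aux ε a c b d hε ha hc hb hd (by linarith)
    have h3 := cov_le_aux ε b a d c hε hb ha hd hc (by linarith)
    have h4 := cov_le_aux ε b d a c hε hb hd ha hc (by linarith)
    rcases le_or_gt 0 (a * d - b * c) with hpos | hneg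
    · have e2 : a * d - b * c ≤ (1 - 4 * ε) * ((a + c) * (b + d)) := by linarith
      calc (a * d - b * c) ^ 2 = (a * d - b * c) * (a * d - b * c) := sq (a * d - b * c)
        _ ≤ ((1 - 4 * ε) * ((a + c) * (b + d))) * ((1 - 4 * ε) * ((a + b) * (c + d))) :=
            mul_le_mul e2 h1 hpos hY
        _ = (1 - 4 * ε) ^ 2 * ((a + c) * (b + d) * ((a + b) * (c + d))) := by ring
    · have e1 : b * c - a * d ≤ (1 - 4 * ε) * ((a + b) * (c + d)) := by linarith
      have e2 : b * c - a * d ≤ (1 - 4 * ε) * ((a + c) * (b + d)) := by linarith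
      have hpos' : (0:ℝ) ≤ b * c - a * d := by linarith
      calc (a * d - b * c) ^ 2 = (b * c - a * d) * (b * c - a * d) := by ring
        _ ≤ ((1 - 4 * ε) * ((a + c) * (b + d))) * ((1 - 4 * ε) * ((a + b) * (c + d))) :=
            mul_le_mul e2 e1 hpos' hY
        _ = (1 - 4 * ε) ^ 2 * ((a + c) * (b + d) * ((a + b) * (c + d))) := by ring
  · refine ⟨1/2 - ε, ε, ε, 1/2 - ε, by linarith, le_refl _, le_refl _, by linarith,
      by ring, ?_⟩
    have h : (1/2 - ε + ε : ℝ) = 1/2 := by ring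
    rw [h]
    norm_num
    ring
end
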